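/- Suppose 0 < B̄ < Σ_{t=1}^K π_t·c_t. Then there exist an index t* ∈ {0,…,K}, constants Ā ∈ (0,1] and α ≥ 0, and a monotone non-increasing budget-feasible allocation rule A* given by A*_t = Ā for t ≤ t* and A*_t = α/√c_t for t > t*, with Σ_{t=1}^K π_t·c_t·A*_t = B̄, such that A* minimizes worst-case variance: sup_{q ∈ [0,1]^K} V(A*, q) ≤ sup_{q ∈ [0,1]^K} V(A', q) for every budget-feasible allocation rule A' ∈ (0,1]^K. -/

import Mathlib

private lemma percoord {q lam c A0 A : ℝ} (hA : 0 < A) (hA1 : A ≤ 1)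
    (hA0 : 0 < A0) (hlc : 0 ≤ lam * c)
    (h1 : lam * c * A0 ^ 2 ≤ q) (h2 : q ≤ lam * c * A0 ^ 2 ∨ A0 = 1) :
    q / A0 + lam * c * A0 ≤ q / A + lam * c * A := by
  have hAA0 : 0 < A * A0 := mul_pos hA hA0
  have key : q / A + lam * c * A - (q / A0 + lam * c * A0)
      = (A0 - A) * (q - lam * c * (A * A0)) / (A * A0) := by
    field_simp
    ring
  have hnum : 0 ≤ (A0 - A) * (q - lam * c * (A * A0)) := by
    rcases le_or_gt A A0 with h | h
    · have h3 : lam * c * (A * A0) ≤ lam * c * (A0 * A0) :=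
        mul_le_mul_of_nonneg_left (mul_le_mul_of_nonneg_right h hA0.le) hlc
      nlinarith
    · rcases h2 with h2 | h2
      · have h3 : lam * c * (A0 * A0) ≤ lam * c * (A * A0) :=
          mul_le_mul_of_nonneg_left (mul_le_mul_of_nonneg_right h.le hA0.le) hlc
        nlinarith
      · exfalso; rw [h2] at h; linarith
  rw [← sub_nonneg, key]
  exact div_nonneg hnum hAA0.le

set_option maxHeartbeats 1600000 in
/-- Optimal allocation for moment estimation: for `0 < B̄ < E[c]` there
is an optimal allocation rule that pools the lowest costs at a constant level `Ā` up to
some threshold index `t*` and allocates proportionally to `1/√c_t` above it, spends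
exactly the budget, and minimizes the worst-case variance `sup_{q ∈ [0,1]^K} V(·,q)`
among all budget-feasible allocation rules. Costs are indexed by `{1, …, K}`. -/
theorem optimal_allocation_moment_estimation
    (K : ℕ) (hK : 1 ≤ K) (c π : ℕ → ℝ) (Bbar : ℝ)
    (hc : ∀ t ∈ Finset.Icc 1 K, 0 < c t)
    (hcmono : ∀ j ∈ Finset.Icc 1 (K - 1), c j < c (j + 1))
    (hπpos : ∀ t ∈ Finset.Icc 1 K, 0 < π t)
    (hπsum : ∑ t ∈ Finset.Icc 1 K, π t = 1)
    (hBbar_pos : 0 < Bbar)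
    (hBbar_ub : Bbar < ∑ t ∈ Finset.Icc 1 K, π t * c t) :
    ∃ tstar : ℕ, tstar ≤ K ∧
    ∃ Abar : ℝ, Abar ∈ Set.Ioc (0 : ℝ) 1 ∧
    ∃ α : ℝ, 0 ≤ α ∧
    ∃ Astar : ℕ → ℝ,
      (∀ t ∈ Finset.Icc 1 K, t ≤ tstar → Astar t = Abar) ∧
      (∀ t ∈ Finset.Icc 1 K, tstar < t → Astar t = α / Real.sqrt (c t)) ∧
      (∀ t ∈ Finset.Icc 1 K, 0 < Astar t ∧ Astar t ≤ 1) ∧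
      (∀ s ∈ Finset.Icc 1 K, ∀ t ∈ Finset.Icc 1 K, s ≤ t → Astar t ≤ Astar s) ∧
      (∑ t ∈ Finset.Icc 1 K, π t * c t * Astar t = Bbar) ∧
      (∀ A' : ℕ → ℝ, (∀ t ∈ Finset.Icc 1 K, 0 < A' t ∧ A' t ≤ 1) →
        (∑ t ∈ Finset.Icc 1 K, π t * c t * A' t ≤ Bbar) →
        sSup {w : ℝ | ∃ q : ℕ → ℝ, (∀ t ∈ Finset.Icc 1 K, q t ∈ Set.Icc (0 : ℝ) 1) ∧
            w = (∑ t ∈ Finset.Icc 1 K, π t * q t / Astar t)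
              - (∑ t ∈ Finset.Icc 1 K, π t * q t) ^ 2}
          ≤ sSup {w : ℝ | ∃ q : ℕ → ℝ, (∀ t ∈ Finset.Icc 1 K, q t ∈ Set.Icc (0 : ℝ) 1) ∧
            w = (∑ t ∈ Finset.Icc 1 K, π t * q t / A' t)
              - (∑ t ∈ Finset.Icc 1 K, π t * q t) ^ 2}) := by
  -- monotonicity of c on Icc 1 K
  have cmono : ∀ s, 1 ≤ s → ∀ t, s ≤ t → t ≤ K → c s ≤ c t := by
    intro s hs t hst htK
    induction t, hst using Nat.le_induction with
    | base => exact le_refl _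
    | succ u hu ih =>
      have h1 : c s ≤ c u := ih (by omega)
      have h2 : c u < c (u + 1) := hcmono u (Finset.mem_Icc.mpr ⟨by omega, by omega⟩)
      linarith
  have h1K : 1 ∈ Finset.Icc 1 K := Finset.mem_Icc.mpr ⟨le_refl 1, hK⟩
  have hcK : 0 < c K := hc K (Finset.mem_Icc.mpr ⟨hK, le_refl K⟩)
  have hcE : 0 < ∑ t ∈ Finset.Icc 1 K, π t * c t := lt_trans hBbar_pos hBbar_ub
  set cE := ∑ t ∈ Finset.Icc 1 K, π t * c t with hcEdef
  clear_value cE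
  have hSsq : 0 < ∑ t ∈ Finset.Icc 1 K, π t * Real.sqrt (c t) :=
    Finset.sum_pos (fun t ht => mul_pos (hπpos t ht) (Real.sqrt_pos.mpr (hc t ht))) ⟨1, h1K⟩
  set Ssq := ∑ t ∈ Finset.Icc 1 K, π t * Real.sqrt (c t) with hSsqdef
  clear_value Ssq
  set β₀ : ℝ := min (1 / c K) (1 / (2 * cE)) with hβ₀def
  clear_value β₀
  have hβ₀pos : 0 < β₀ := by
    rw [hβ₀def]; exact lt_min (by positivity) (by positivity)
  set β₁ : ℝ := β₀ + (Ssq / Bbar) ^ 2 with hβ₁def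
  clear_value β₁
  have hβ₀₁ : β₀ ≤ β₁ := by
    rw [hβ₁def]; exact le_add_of_nonneg_right (sq_nonneg _)
  set Mf : ℝ → ℝ := fun β => ∑ t ∈ Finset.Icc 1 K, π t * min 1 (β * c t) with hMfdef
  clear_value Mf
  set Ab : ℝ → ℝ := fun β => min 1 (1 / (2 * Mf β)) with hAbdef
  clear_value Ab
  set Bf : ℝ → ℝ := fun β =>
    ∑ t ∈ Finset.Icc 1 K, π t * c t * (Ab β * min 1 (1 / Real.sqrt (β * c t))) with hBfdef
  clear_value Bf
  -- positivity of Mf for positive β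
  have hMfpos : ∀ β : ℝ, 0 < β → 0 < Mf β := by
    intro β hβ
    simp only [hMfdef]
    exact Finset.sum_pos
      (fun t ht => mul_pos (hπpos t ht) (lt_min one_pos (mul_pos hβ (hc t ht)))) ⟨1, h1K⟩
  -- continuity
  have hBfcont : ContinuousOn Bf (Set.Icc β₀ β₁) := by
    rw [hBfdef]
    have hMcont : Continuous Mf := by
      rw [hMfdef]
      apply continuous_finset_sum
      intro t _
      exact continuous_const.mul (continuous_const.min (continuous_id.mul continuous_const))
    have hAbcont : ContinuousOn Ab (Set.Icc β₀ β₁) := by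
      rw [hAbdef]
      apply ContinuousOn.inf continuousOn_const
      apply ContinuousOn.div continuousOn_const ((continuous_const.mul hMcont).continuousOn)
      intro x hx
      have : 0 < Mf x := hMfpos x (lt_of_lt_of_le hβ₀pos hx.1)
      exact mul_ne_zero two_ne_zero this.ne'
    apply continuousOn_finset_sum
    intro t ht
    apply ContinuousOn.mul continuousOn_const
    apply hAbcont.mul
    apply ContinuousOn.inf continuousOn_const
    apply ContinuousOn.div continuousOn_const
    · exact (Real.continuous_sqrt.comp (continuous_id.mul continuous_const)).continuousOn
    · intro x hx
      have hx0 : 0 < x := lt_of_lt_of_le hβ₀pos hx.1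
      have : 0 < Real.sqrt (x * c t) := Real.sqrt_pos.mpr (mul_pos hx0 (hc t ht))
      exact ne_of_gt this
  -- endpoint values
  have hB0 : Bf β₀ = cE := by
    have hβc : ∀ t ∈ Finset.Icc 1 K, β₀ * c t ≤ 1 := by
      intro t ht
      obtain ⟨ht1, ht2⟩ := Finset.mem_Icc.mp ht
      have hle : c t ≤ c K := cmono t ht1 K ht2 le_rfl
      have h1 : β₀ * c t ≤ (1 / c K) * c t :=
        mul_le_mul_of_nonneg_right (by rw [hβ₀def]; exact min_le_left _ _) (hc t ht).le
      have h2 : (1 / c K) * c t ≤ 1 := by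
        rw [div_mul_eq_mul_div, one_mul, div_le_one hcK]; exact hle
      linarith
    have hMf0 : Mf β₀ = β₀ * cE := by
      simp only [hMfdef, hcEdef, Finset.mul_sum]
      apply Finset.sum_congr rfl
      intro t ht
      rw [min_eq_right (hβc t ht)]; ring
    have hAb0 : Ab β₀ = 1 := by
      simp only [hAbdef]
      apply min_eq_left
      rw [hMf0]
      have hr : β₀ ≤ 1 / (2 * cE) := by rw [hβ₀def]; exact min_le_right _ _
      have h2 : 2 * (β₀ * cE) ≤ 1 := by
        have : 2 * (β₀ * cE) ≤ 2 * ((1 / (2 * cE)) * cE) := by nlinarith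
        have he : 2 * ((1 / (2 * cE)) * cE) = 1 := by field_simp
        linarith
      exact one_le_one_div (by positivity) h2
    simp only [hBfdef, hcEdef]
    apply Finset.sum_congr rfl
    intro t ht
    have hs1 : Real.sqrt (β₀ * c t) ≤ 1 := Real.sqrt_le_one.mpr (hβc t ht)
    have hs0 : 0 < Real.sqrt (β₀ * c t) := Real.sqrt_pos.mpr (mul_pos hβ₀pos (hc t ht))
    rw [hAb0, min_eq_left (one_le_one_div hs0 hs1), one_mul, mul_one]
  have hβ₁pos : 0 < β₁ := lt_of_lt_of_le hβ₀pos hβ₀₁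
  have hB1 : Bf β₁ ≤ Bbar := by
    have step : Bf β₁ ≤ Ssq * (1 / Real.sqrt β₁) := by
      rw [hBfdef, hSsqdef, Finset.sum_mul]
      apply Finset.sum_le_sum
      intro t ht
      have hct := hc t ht
      have hs0 : 0 < Real.sqrt (β₁ * c t) := Real.sqrt_pos.mpr (mul_pos hβ₁pos hct)
      have hc2 : Real.sqrt (c t) * Real.sqrt (c t) = c t := Real.mul_self_sqrt hct.le
      have e : c t * (1 / Real.sqrt (β₁ * c t)) = Real.sqrt (c t) * (1 / Real.sqrt β₁) := by
        rw [mul_one_div, mul_one_div, Real.sqrt_mul hβ₁pos.le,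
          div_eq_div_iff (ne_of_gt (by positivity)) (ne_of_gt (by positivity))]
        linear_combination -Real.sqrt β₁ * hc2
      have hb : Ab β₁ * min 1 (1 / Real.sqrt (β₁ * c t)) ≤ 1 / Real.sqrt (β₁ * c t) := by
        have h1 : Ab β₁ ≤ 1 := by simp only [hAbdef]; exact min_le_left _ _
        have h2 : min 1 (1 / Real.sqrt (β₁ * c t)) ≤ 1 / Real.sqrt (β₁ * c t) :=
          min_le_right _ _
        have h3 : (0:ℝ) ≤ min 1 (1 / Real.sqrt (β₁ * c t)) :=
          le_min zero_le_one (by positivity)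
        nlinarith
      calc π t * c t * (Ab β₁ * min 1 (1 / Real.sqrt (β₁ * c t)))
          ≤ π t * c t * (1 / Real.sqrt (β₁ * c t)) := by
            apply mul_le_mul_of_nonneg_left hb (mul_nonneg (hπpos t ht).le hct.le)
        _ = π t * (c t * (1 / Real.sqrt (β₁ * c t))) := by ring
        _ = π t * (Real.sqrt (c t) * (1 / Real.sqrt β₁)) := by rw [e]
        _ = π t * Real.sqrt (c t) * (1 / Real.sqrt β₁) := by ring
    have hsq : Ssq / Bbar ≤ Real.sqrt β₁ := by
      have : Real.sqrt ((Ssq / Bbar) ^ 2) ≤ Real.sqrt β₁ := by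
        apply Real.sqrt_le_sqrt; rw [hβ₁def]; linarith [hβ₀pos]
      rwa [Real.sqrt_sq (by positivity)] at this
    have hfin : Ssq * (1 / Real.sqrt β₁) ≤ Bbar := by
      rw [mul_one_div, div_le_iff₀ (by positivity)]
      calc Ssq = (Ssq / Bbar) * Bbar := by field_simp
        _ ≤ Real.sqrt β₁ * Bbar := by
            apply mul_le_mul_of_nonneg_right hsq hBbar_pos.le
        _ = Bbar * Real.sqrt β₁ := by ring
    linarith
  -- IVT
  have hmem : Bbar ∈ Set.Icc (Bf β₁) (Bf β₀) := ⟨hB1, by rw [hB0]; exact hBbar_ub.le⟩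
  obtain ⟨β, hβI, hβeq⟩ := intermediate_value_Icc' hβ₀₁ hBfcont hmem
  have hβpos : 0 < β := lt_of_lt_of_le hβ₀pos hβI.1
  classical
  -- definitions at β
  set M := Mf β with hMdef
  clear_value M
  have hM0 : 0 < M := by rw [hMdef]; exact hMfpos β hβpos
  have hM1 : M ≤ 1 := by
    rw [hMdef]
    simp only [hMfdef]
    calc ∑ t ∈ Finset.Icc 1 K, π t * min 1 (β * c t)
        ≤ ∑ t ∈ Finset.Icc 1 K, π t := by
          apply Finset.sum_le_sum
          intro t ht
          have h1 := mul_le_mul_of_nonneg_left (min_le_left 1 (β * c t)) (hπpos t ht).le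
          linarith [h1, (mul_one (π t)).symm ▸ h1]
      _ = 1 := hπsum
  set Abar := min 1 (1 / (2 * M)) with hAbardef
  clear_value Abar
  have hAbar0 : 0 < Abar := by
    rw [hAbardef]
    exact lt_min one_pos (one_div_pos.mpr (by linarith))
  have hAbar1 : Abar ≤ 1 := by rw [hAbardef]; exact min_le_left _ _
  set θ : ℝ := if M < 1/2 then (1/2 - M)/(1 - M) else 0 with hθdef
  clear_value θ
  have hθ0 : 0 ≤ θ := by
    rw [hθdef]
    split
    · apply div_nonneg (by linarith) (by linarith)
    · exact le_refl 0
  have hθ1 : θ ≤ 1 := by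
    rw [hθdef]
    split
    · rename_i h
      rw [div_le_one (by linarith)]
      linarith
    · exact zero_le_one
  set mstar := 1 / (2 * Abar) with hmstardef
  clear_value mstar
  have hmstar0 : 0 < mstar := by
    rw [hmstardef]; exact one_div_pos.mpr (by linarith)
  have h2mstar : 2 * mstar = 1 / Abar := by
    rw [hmstardef]; field_simp
  set qs : ℕ → ℝ := fun t => min 1 (β * c t) + θ * (1 - min 1 (β * c t)) with hqsdef
  clear_value qs
  set As : ℕ → ℝ := fun t => Abar * min 1 (1 / Real.sqrt (β * c t)) with hAsdef
  clear_value As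
  set lam := β / Abar ^ 2 with hlamdef
  clear_value lam
  have hlam0 : 0 ≤ lam := by
    rw [hlamdef]; exact div_nonneg hβpos.le (by positivity)
  have hsqrtpos : ∀ t ∈ Finset.Icc 1 K, 0 < Real.sqrt (β * c t) :=
    fun t ht => Real.sqrt_pos.mpr (mul_pos hβpos (hc t ht))
  have hAspos : ∀ t ∈ Finset.Icc 1 K, 0 < As t := by
    intro t ht
    simp only [hAsdef]
    exact mul_pos hAbar0 (lt_min one_pos (one_div_pos.mpr (hsqrtpos t ht)))
  have hAsleAbar : ∀ t ∈ Finset.Icc 1 K, As t ≤ Abar := by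
    intro t ht
    have h1 : min 1 (1 / Real.sqrt (β * c t)) ≤ 1 := min_le_left _ _
    simp only [hAsdef]
    calc Abar * min 1 (1 / Real.sqrt (β * c t))
        ≤ Abar * 1 := mul_le_mul_of_nonneg_left h1 hAbar0.le
      _ = Abar := mul_one _
  have hAsle1 : ∀ t ∈ Finset.Icc 1 K, As t ≤ 1 :=
    fun t ht => le_trans (hAsleAbar t ht) hAbar1
  have hpooled : ∀ t ∈ Finset.Icc 1 K, β * c t ≤ 1 → As t = Abar := by
    intro t ht h
    have h1 : Real.sqrt (β * c t) ≤ 1 := Real.sqrt_le_one.mpr h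
    have h2 : (1:ℝ) ≤ 1 / Real.sqrt (β * c t) := one_le_one_div (hsqrtpos t ht) h1
    simp only [hAsdef]
    rw [min_eq_left h2, mul_one]
  have hunpooled : ∀ t ∈ Finset.Icc 1 K, 1 ≤ β * c t →
      As t = Abar * (1 / Real.sqrt (β * c t)) := by
    intro t ht h
    have h1 : (1:ℝ) ≤ Real.sqrt (β * c t) := by
      rw [show (1:ℝ) = Real.sqrt 1 by simp]
      exact Real.sqrt_le_sqrt h
    have h2 : 1 / Real.sqrt (β * c t) ≤ 1 := by
      rw [div_le_one (hsqrtpos t ht)]; exact h1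
    simp only [hAsdef]
    rw [min_eq_right h2]
  -- the key pointwise facts
  have hkey : ∀ t ∈ Finset.Icc 1 K,
      lam * c t * (As t) ^ 2 ≤ qs t ∧
      (qs t ≤ lam * c t * (As t) ^ 2 ∨ As t = 1) ∧
      0 ≤ qs t ∧ qs t ≤ 1 ∧ (As t = Abar ∨ qs t = 1) := by
    intro t ht
    have hct := hc t ht
    have hμ0 : (0:ℝ) ≤ min 1 (β * c t) := le_min zero_le_one (by positivity)
    have hμ1 : min 1 (β * c t) ≤ 1 := min_le_left _ _
    have hq0 : 0 ≤ qs t := by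
      simp only [hqsdef]
      nlinarith [mul_nonneg hθ0 (by linarith : (0:ℝ) ≤ 1 - min 1 (β * c t))]
    have hq1 : qs t ≤ 1 := by
      simp only [hqsdef]
      nlinarith [mul_nonneg (by linarith : (0:ℝ) ≤ 1 - θ)
        (by linarith : (0:ℝ) ≤ 1 - min 1 (β * c t))]
    rcases le_or_gt (β * c t) 1 with hple | hgt
    · -- pooled
      have hAeq : As t = Abar := hpooled t ht hple
      have hμ : min 1 (β * c t) = β * c t := min_eq_right hple
      have hlA : lam * c t * (As t) ^ 2 = β * c t := by
        rw [hAeq, hlamdef]; field_simp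
      constructor
      · rw [hlA]
        simp only [hqsdef]
        rw [hμ]
        nlinarith [mul_nonneg hθ0 (by linarith : (0:ℝ) ≤ 1 - β * c t)]
      refine ⟨?_, hq0, hq1, Or.inl hAeq⟩
      by_cases hM2 : M < 1/2
      · right
        rw [hAeq, hAbardef]
        apply min_eq_left
        apply one_le_one_div (by linarith)
        linarith
      · left
        rw [hlA]
        simp only [hqsdef]
        rw [hμ, hθdef, if_neg hM2]
        simp
    · -- unpooled
      have hμ : min 1 (β * c t) = 1 := min_eq_left hgt.le
      have hqeq : qs t = 1 := by
        simp only [hqsdef]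
        rw [hμ]; ring
      have hAeq : As t = Abar * (1 / Real.sqrt (β * c t)) := hunpooled t ht hgt.le
      have hsq : Real.sqrt (β * c t) ^ 2 = β * c t := Real.sq_sqrt (by positivity)
      have hlA : lam * c t * (As t) ^ 2 = 1 := by
        rw [hAeq, hlamdef]
        field_simp
        rw [hsq]
      refine ⟨?_, Or.inl ?_, hq0, hq1, Or.inr hqeq⟩
      · rw [hlA, hqeq]
      · rw [hlA, hqeq]
  -- sum of qs
  have hqsum : ∑ t ∈ Finset.Icc 1 K, π t * qs t = mstar := by
    have expand : ∑ t ∈ Finset.Icc 1 K, π t * qs t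
        = (1 - θ) * M + θ := by
      have e : ∀ t ∈ Finset.Icc 1 K, π t * qs t
          = (1 - θ) * (π t * min 1 (β * c t)) + θ * π t := by
        intro t ht
        simp only [hqsdef]
        ring
      have hMs : ∑ t ∈ Finset.Icc 1 K, π t * min 1 (β * c t) = M := by
        rw [hMdef]; simp only [hMfdef]
      rw [Finset.sum_congr rfl e, Finset.sum_add_distrib, ← Finset.mul_sum, ← Finset.mul_sum,
        hπsum, hMs]
      ring
    rw [expand]
    by_cases hM2 : M < 1/2
    · have hθv : θ = (1/2 - M)/(1 - M) := by rw [hθdef, if_pos hM2]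
      have hAv : Abar = 1 := by
        rw [hAbardef]
        apply min_eq_left
        apply one_le_one_div (by linarith)
        linarith
      rw [hθv, hmstardef, hAv]
      have h1M : (1:ℝ) - M ≠ 0 := by linarith
      field_simp
      ring
    · have hθv : θ = 0 := by rw [hθdef, if_neg hM2]
      have hAv : Abar = 1 / (2 * M) := by
        rw [hAbardef]
        apply min_eq_right
        rw [div_le_one (by linarith)]
        linarith
      rw [hθv, hmstardef, hAv]
      field_simp
      ring
  -- budget identity
  have hbudget : ∑ t ∈ Finset.Icc 1 K, π t * c t * As t = Bbar := by
    rw [← hβeq, hBfdef]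
    apply Finset.sum_congr rfl
    intro t ht
    simp only [hAsdef, hAbardef, hMdef, hAbdef]
    -- tstar
  set S : Finset ℕ := (Finset.Icc 1 K).filter (fun t => β * c t ≤ 1) with hSdef
  set tstar := S.sup id with htsdef
  clear_value tstar
  have htstarK : tstar ≤ K := by
    rw [htsdef]
    apply Finset.sup_le
    intro b hb
    exact (Finset.mem_Icc.mp (Finset.mem_filter.mp hb).1).2
  have hpool_le : ∀ t ∈ Finset.Icc 1 K, t ≤ tstar → β * c t ≤ 1 := by
    intro t ht hle
    rcases S.eq_empty_or_nonempty with hS | hS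
    · exfalso
      rw [htsdef, hS] at hle
      simp only [Finset.sup_empty, Nat.bot_eq_zero, Nat.le_zero] at hle
      have := (Finset.mem_Icc.mp ht).1
      omega
    · obtain ⟨b, hbS, hbeq⟩ := Finset.exists_mem_eq_sup S hS id
      obtain ⟨hbI, hbc⟩ := Finset.mem_filter.mp hbS
      obtain ⟨hb1, hbK⟩ := Finset.mem_Icc.mp hbI
      rw [htsdef, hbeq] at hle
      have hcc : c t ≤ c b := cmono t (Finset.mem_Icc.mp ht).1 b hle hbK
      nlinarith
  have hunpool_gt : ∀ t ∈ Finset.Icc 1 K, tstar < t → 1 < β * c t := by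
    intro t ht hgt
    by_contra h
    push_neg at h
    have htS : t ∈ S := Finset.mem_filter.mpr ⟨ht, h⟩
    have hts := Finset.le_sup (f := id) htS
    rw [← htsdef] at hts
    simp only [id] at hts
    omega
  refine ⟨tstar, htstarK, Abar, ⟨hAbar0, hAbar1⟩, Abar / Real.sqrt β,
    div_nonneg hAbar0.le (Real.sqrt_nonneg _), As, ?_, ?_, ?_, ?_, hbudget, ?_⟩
  · intro t ht hle
    exact hpooled t ht (hpool_le t ht hle)
  · intro t ht hgt
    rw [hunpooled t ht (hunpool_gt t ht hgt).le]
    rw [mul_one_div, Real.sqrt_mul hβpos.le, div_div]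
  · intro t ht
    exact ⟨hAspos t ht, hAsle1 t ht⟩
  · intro s hs t ht hst
    simp only [hAsdef]
    apply mul_le_mul_of_nonneg_left _ hAbar0.le
    apply min_le_min le_rfl
    apply one_div_le_one_div_of_le (hsqrtpos s hs)
    apply Real.sqrt_le_sqrt
    have hcc : c s ≤ c t := cmono s (Finset.mem_Icc.mp hs).1 t hst (Finset.mem_Icc.mp ht).2
    nlinarith
  -- optimality
  intro A' hA' hbud'
  have hqmem : ∀ t ∈ Finset.Icc 1 K, qs t ∈ Set.Icc (0:ℝ) 1 := by
    intro t ht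
    exact ⟨(hkey t ht).2.2.1, (hkey t ht).2.2.2.1⟩
  have hub : ∀ q : ℕ → ℝ, (∀ t ∈ Finset.Icc 1 K, q t ∈ Set.Icc (0:ℝ) 1) →
      (∑ t ∈ Finset.Icc 1 K, π t * q t / As t) - (∑ t ∈ Finset.Icc 1 K, π t * q t) ^ 2
        ≤ (∑ t ∈ Finset.Icc 1 K, π t * qs t / As t)
          - (∑ t ∈ Finset.Icc 1 K, π t * qs t) ^ 2 := by
    intro q hq
    have hterm : ∀ t ∈ Finset.Icc 1 K,
        π t * q t / As t - π t * qs t / As t ≤ 2 * mstar * (π t * q t - π t * qs t) := by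
      intro t ht
      have hApos := hAspos t ht
      have heq : π t * q t / As t - π t * qs t / As t
          = π t * (q t - qs t) * (1 / As t) := by field_simp
      rcases (hkey t ht).2.2.2.2 with hcase | hcase
      · rw [heq, hcase, ← h2mstar]
        have e2 : π t * (q t - qs t) * (1 / Abar) = 2 * mstar * (π t * q t - π t * qs t) := by
          rw [h2mstar]; ring
        rw [h2mstar] at e2 ⊢
        linarith [e2]
      · have h2A : 2 * mstar ≤ 1 / As t := by
          rw [h2mstar]
          exact one_div_le_one_div_of_le hApos (hAsleAbar t ht)
        have hqle : q t - qs t ≤ 0 := by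
          have := (hq t ht).2
          rw [hcase]; linarith
        have hπq : π t * (q t - qs t) ≤ 0 :=
          mul_nonpos_of_nonneg_of_nonpos (hπpos t ht).le hqle
        have key2 := mul_le_mul_of_nonpos_left h2A hπq
        rw [heq]
        nlinarith [key2]
    have hsums := Finset.sum_le_sum hterm
    rw [Finset.sum_sub_distrib] at hsums
    have hr : ∑ t ∈ Finset.Icc 1 K, 2 * mstar * (π t * q t - π t * qs t)
        = 2 * mstar * ((∑ t ∈ Finset.Icc 1 K, π t * q t) - mstar) := by
      rw [← Finset.mul_sum, Finset.sum_sub_distrib, hqsum]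
    rw [hr] at hsums
    rw [hqsum]
    nlinarith [sq_nonneg ((∑ t ∈ Finset.Icc 1 K, π t * q t) - mstar), hsums]
  have hlow : (∑ t ∈ Finset.Icc 1 K, π t * qs t / As t)
      ≤ ∑ t ∈ Finset.Icc 1 K, π t * qs t / A' t := by
    have hper : ∀ t ∈ Finset.Icc 1 K,
        π t * (qs t / As t + lam * c t * As t) ≤ π t * (qs t / A' t + lam * c t * A' t) := by
      intro t ht
      apply mul_le_mul_of_nonneg_left _ (hπpos t ht).le
      exact percoord (hA' t ht).1 (hA' t ht).2 (hAspos t ht)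
        (mul_nonneg hlam0 (hc t ht).le) (hkey t ht).1 (hkey t ht).2.1
    have hsum := Finset.sum_le_sum hper
    have e : ∀ A : ℕ → ℝ, ∑ t ∈ Finset.Icc 1 K, π t * (qs t / A t + lam * c t * A t)
        = (∑ t ∈ Finset.Icc 1 K, π t * qs t / A t)
          + lam * ∑ t ∈ Finset.Icc 1 K, π t * c t * A t := by
      intro A
      rw [Finset.mul_sum, ← Finset.sum_add_distrib]
      apply Finset.sum_congr rfl
      intro t ht
      ring
    rw [e As, e A'] at hsum
    rw [hbudget] at hsum
    have h2 : lam * (∑ t ∈ Finset.Icc 1 K, π t * c t * A' t) ≤ lam * Bbar :=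
      mul_le_mul_of_nonneg_left hbud' hlam0
    linarith
  have hbddA' : BddAbove {w : ℝ | ∃ q : ℕ → ℝ,
      (∀ t ∈ Finset.Icc 1 K, q t ∈ Set.Icc (0:ℝ) 1) ∧
      w = (∑ t ∈ Finset.Icc 1 K, π t * q t / A' t)
        - (∑ t ∈ Finset.Icc 1 K, π t * q t) ^ 2} := by
    refine ⟨∑ t ∈ Finset.Icc 1 K, π t / A' t, ?_⟩
    rintro w ⟨q, hq, rfl⟩
    have h1 : ∑ t ∈ Finset.Icc 1 K, π t * q t / A' t
        ≤ ∑ t ∈ Finset.Icc 1 K, π t / A' t := by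
      apply Finset.sum_le_sum
      intro t ht
      have hπt := (hπpos t ht).le
      have hqt1 := (hq t ht).2
      have hqt0 := (hq t ht).1
      have hnum : π t * q t ≤ π t := by nlinarith
      exact (div_le_div_iff_of_pos_right (hA' t ht).1).mpr hnum
    nlinarith [sq_nonneg (∑ t ∈ Finset.Icc 1 K, π t * q t)]
  have hmem' : ((∑ t ∈ Finset.Icc 1 K, π t * qs t / A' t)
      - (∑ t ∈ Finset.Icc 1 K, π t * qs t) ^ 2) ∈ {w : ℝ | ∃ q : ℕ → ℝ,
      (∀ t ∈ Finset.Icc 1 K, q t ∈ Set.Icc (0:ℝ) 1) ∧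
      w = (∑ t ∈ Finset.Icc 1 K, π t * q t / A' t)
        - (∑ t ∈ Finset.Icc 1 K, π t * q t) ^ 2} := ⟨qs, hqmem, rfl⟩
  have hchain : sSup {w : ℝ | ∃ q : ℕ → ℝ,
      (∀ t ∈ Finset.Icc 1 K, q t ∈ Set.Icc (0:ℝ) 1) ∧
      w = (∑ t ∈ Finset.Icc 1 K, π t * q t / As t)
        - (∑ t ∈ Finset.Icc 1 K, π t * q t) ^ 2}
      ≤ (∑ t ∈ Finset.Icc 1 K, π t * qs t / A' t)
        - (∑ t ∈ Finset.Icc 1 K, π t * qs t) ^ 2 := by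
    refine csSup_le ?_ ?_
    · exact ⟨_, ⟨qs, hqmem, rfl⟩⟩
    rintro w ⟨q, hq, rfl⟩
    calc (∑ t ∈ Finset.Icc 1 K, π t * q t / As t) - (∑ t ∈ Finset.Icc 1 K, π t * q t) ^ 2
        ≤ (∑ t ∈ Finset.Icc 1 K, π t * qs t / As t)
          - (∑ t ∈ Finset.Icc 1 K, π t * qs t) ^ 2 := hub q hq
      _ ≤ (∑ t ∈ Finset.Icc 1 K, π t * qs t / A' t)
          - (∑ t ∈ Finset.Icc 1 K, π t * qs t) ^ 2 := by linarith [hlow]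
  exact le_trans hchain (le_csSup hbddA' hmem')
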